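/- The function W_en(ϱ) := 1 − ϱ V_en^1(ϱ), where V_en^1(ϱ) = 4 ∫_0^{1/2} cos²(πs)/√(ϱ²+s²) ds, satisfies 0 ≤ W_en ≤ 1 and ∫_0^∞ W_en(ϱ) dϱ = 1/4 − 1/π². -/

import Mathlib

open Real MeasureTheory intervalIntegral

/-- The effective electron–nucleus potential at width `1`:
`V_en^1(ϱ) = 4 ∫_0^{1/2} cos²(πs) / √(ϱ² + s²) ds`. -/
noncomputable def Ven1 (ϱ : ℝ) : ℝ :=
  4 * ∫ s in (0 : ℝ)..(1 / 2 : ℝ), Real.cos (π * s) ^ 2 / Real.sqrt (ϱ ^ 2 + s ^ 2)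

namespace WenAux

open Set Filter

/-- The nonnegative integrand. -/
noncomputable def g (ϱ s : ℝ) : ℝ :=
  Real.cos (π * s) ^ 2 * (1 - ϱ / Real.sqrt (ϱ ^ 2 + s ^ 2))

lemma sqrt_pos_of_rho (ϱ s : ℝ) (hϱ : 0 < ϱ) : 0 < Real.sqrt (ϱ ^ 2 + s ^ 2) := by
  apply Real.sqrt_pos.2; positivity

lemma rho_le_sqrt (ϱ s : ℝ) (hϱ : 0 ≤ ϱ) : ϱ ≤ Real.sqrt (ϱ ^ 2 + s ^ 2) := by
  have : ϱ = Real.sqrt (ϱ ^ 2) := by rw [Real.sqrt_sq hϱ]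
  rw [this]
  exact Real.sqrt_le_sqrt (by nlinarith [sq_nonneg s, Real.sq_sqrt hϱ])

lemma frac_nonneg (ϱ s : ℝ) (hϱ : 0 < ϱ) : 0 ≤ ϱ / Real.sqrt (ϱ ^ 2 + s ^ 2) :=
  div_nonneg hϱ.le (Real.sqrt_nonneg _)

lemma frac_le_one (ϱ s : ℝ) (hϱ : 0 < ϱ) : ϱ / Real.sqrt (ϱ ^ 2 + s ^ 2) ≤ 1 :=
  div_le_one_of_le₀ (rho_le_sqrt ϱ s hϱ.le) (Real.sqrt_nonneg _)

lemma g_nonneg (ϱ s : ℝ) (hϱ : 0 < ϱ) : 0 ≤ g ϱ s := by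
  have h1 := frac_le_one ϱ s hϱ
  have h2 : (0:ℝ) ≤ Real.cos (π * s) ^ 2 := sq_nonneg _
  have : 0 ≤ 1 - ϱ / Real.sqrt (ϱ ^ 2 + s ^ 2) := by linarith
  exact mul_nonneg h2 this

lemma g_le (ϱ s : ℝ) (hϱ : 0 < ϱ) : g ϱ s ≤ Real.cos (π * s) ^ 2 := by
  have h1 := frac_nonneg ϱ s hϱ
  have h2 : (0:ℝ) ≤ Real.cos (π * s) ^ 2 := sq_nonneg _
  have : 1 - ϱ / Real.sqrt (ϱ ^ 2 + s ^ 2) ≤ 1 := by linarith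
  calc g ϱ s ≤ Real.cos (π * s) ^ 2 * 1 := by
        exact mul_le_mul_of_nonneg_left this h2
    _ = Real.cos (π * s) ^ 2 := mul_one _

lemma cos_sq_integral : ∫ s in (0:ℝ)..(1/2:ℝ), Real.cos (π * s) ^ 2 = 1/4 := by
  have hπ : π ≠ 0 := Real.pi_ne_zero
  have := intervalIntegral.integral_comp_mul_left (a := (0:ℝ)) (b := (1/2:ℝ))
    (fun x => Real.cos x ^ 2) hπ
  rw [this]
  rw [integral_cos_sq]
  rw [mul_zero, mul_one_div]
  simp [Real.cos_pi_div_two]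
  field_simp
  norm_num

lemma cont_inv_sqrt (ϱ : ℝ) (hϱ : 0 < ϱ) :
    Continuous (fun s : ℝ => Real.cos (π * s) ^ 2 / Real.sqrt (ϱ ^ 2 + s ^ 2)) := by
  apply Continuous.div
  · fun_prop
  · fun_prop
  · intro s
    exact (sqrt_pos_of_rho ϱ s hϱ).ne'

lemma Wen_eq (ϱ : ℝ) (hϱ : 0 < ϱ) :
    1 - ϱ * Ven1 ϱ = 4 * ∫ s in (0:ℝ)..(1/2:ℝ), g ϱ s := by
  have hc := cont_inv_sqrt ϱ hϱ
  have hint1 : IntervalIntegrable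
      (fun s : ℝ => Real.cos (π * s) ^ 2 / Real.sqrt (ϱ ^ 2 + s ^ 2)) volume 0 (1/2) :=
    hc.intervalIntegrable _ _
  have hint2 : IntervalIntegrable (fun s : ℝ => Real.cos (π * s) ^ 2) volume 0 (1/2) := by
    apply Continuous.intervalIntegrable; fun_prop
  have hg : ∀ s : ℝ, g ϱ s = Real.cos (π * s) ^ 2
      - ϱ * (Real.cos (π * s) ^ 2 / Real.sqrt (ϱ ^ 2 + s ^ 2)) := by
    intro s; unfold g; ring
  have : (∫ s in (0:ℝ)..(1/2:ℝ), g ϱ s)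
      = (∫ s in (0:ℝ)..(1/2:ℝ), Real.cos (π * s) ^ 2)
        - ϱ * ∫ s in (0:ℝ)..(1/2:ℝ), Real.cos (π * s) ^ 2 / Real.sqrt (ϱ ^ 2 + s ^ 2) := by
    rw [show (fun s => g ϱ s) = fun s => Real.cos (π * s) ^ 2
        - ϱ * (Real.cos (π * s) ^ 2 / Real.sqrt (ϱ ^ 2 + s ^ 2)) from funext hg]
    rw [intervalIntegral.integral_sub hint2 (hint1.const_mul ϱ),
      intervalIntegral.integral_const_mul]
  rw [this, cos_sq_integral, Ven1]
  ring

/-- Derivative computation for the inner improper integral. -/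
lemma hasDeriv (s : ℝ) (hs : 0 < s) (ϱ : ℝ) :
    HasDerivAt (fun x : ℝ => x - Real.sqrt (x ^ 2 + s ^ 2))
      (1 - ϱ / Real.sqrt (ϱ ^ 2 + s ^ 2)) ϱ := by
  have hpos : (0:ℝ) < ϱ ^ 2 + s ^ 2 := by positivity
  have h1 : HasDerivAt (fun x : ℝ => x ^ 2 + s ^ 2) (2 * ϱ) ϱ := by
    simpa using ((hasDerivAt_pow 2 ϱ).add_const (s ^ 2))
  have h2 : HasDerivAt Real.sqrt (1 / (2 * Real.sqrt (ϱ ^ 2 + s ^ 2))) (ϱ ^ 2 + s ^ 2) :=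
    Real.hasDerivAt_sqrt hpos.ne'
  have h3 := h2.comp ϱ h1
  have hsq : Real.sqrt (ϱ ^ 2 + s ^ 2) ≠ 0 := (Real.sqrt_pos.2 hpos).ne'
  have h4 : HasDerivAt (fun x : ℝ => Real.sqrt (x ^ 2 + s ^ 2))
      (ϱ / Real.sqrt (ϱ ^ 2 + s ^ 2)) ϱ := by
    exact h3.congr_deriv (by field_simp)
  exact (hasDerivAt_id' ϱ).sub h4

lemma tendsto_diff (s : ℝ) (hs : 0 < s) :
    Tendsto (fun x : ℝ => x - Real.sqrt (x ^ 2 + s ^ 2)) atTop (nhds 0) := by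
  have key : Tendsto (fun x : ℝ => Real.sqrt (x ^ 2 + s ^ 2) - x) atTop (nhds 0) := by
    apply squeeze_zero' (g := fun x : ℝ => s ^ 2 / x)
    · filter_upwards [eventually_gt_atTop (0:ℝ)] with x hx
      have := rho_le_sqrt x s hx.le
      linarith
    · filter_upwards [eventually_gt_atTop (0:ℝ)] with x hx
      have hle : Real.sqrt (x ^ 2 + s ^ 2) ≤ x + s ^ 2 / x := by
        have h1 : x + s ^ 2 / x = Real.sqrt ((x + s ^ 2 / x) ^ 2) := by
          rw [Real.sqrt_sq (by positivity)]
        rw [h1]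
        apply Real.sqrt_le_sqrt
        have hx' : x ≠ 0 := hx.ne'
        have : (x + s ^ 2 / x) ^ 2 = x ^ 2 + 2 * s ^ 2 + (s ^ 2 / x) ^ 2 := by
          field_simp; ring
        nlinarith [sq_nonneg (s ^ 2 / x), sq_nonneg s]
      linarith
    · simpa [div_eq_mul_inv] using tendsto_inv_atTop_zero.const_mul (s ^ 2)
  have := key.neg
  simp only [neg_zero] at this
  convert this using 2 with x
  ring

lemma inner_integrable (s : ℝ) (hs : 0 < s) :
    IntegrableOn (fun ϱ : ℝ => 1 - ϱ / Real.sqrt (ϱ ^ 2 + s ^ 2)) (Ioi 0) := by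
  apply integrableOn_Ioi_deriv_of_nonneg' (fun x _ => hasDeriv s hs x)
    (fun x hx => by
      have := frac_le_one x s hx
      linarith)
    (tendsto_diff s hs)

lemma inner_integral (s : ℝ) (hs : 0 < s) :
    ∫ ϱ in Ioi (0:ℝ), (1 - ϱ / Real.sqrt (ϱ ^ 2 + s ^ 2)) = s := by
  have := integral_Ioi_of_hasDerivAt_of_nonneg' (fun x _ => hasDeriv s hs x)
    (fun x hx => by
      have := frac_le_one x s hx
      linarith)
    (tendsto_diff s hs)
  rw [this]
  simp [Real.sqrt_sq hs.le]

lemma inner_integrable_g (s : ℝ) (hs : 0 < s) :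
    IntegrableOn (fun ϱ : ℝ => g ϱ s) (Ioi 0) := by
  unfold g
  exact (inner_integrable s hs).const_mul _

lemma inner_integral_g (s : ℝ) (hs : 0 < s) :
    ∫ ϱ in Ioi (0:ℝ), g ϱ s = Real.cos (π * s) ^ 2 * s := by
  unfold g
  rw [MeasureTheory.integral_const_mul, inner_integral s hs]

lemma g_measurable : Measurable (Function.uncurry g) := by
  unfold g Function.uncurry
  apply Measurable.mul
  · fun_prop
  · apply Measurable.sub measurable_const
    apply Measurable.div
    · exact measurable_fst
    · fun_prop

lemma final_integral : ∫ s in (0:ℝ)..(1/2:ℝ), Real.cos (π * s) ^ 2 * s = 1/16 - 1/(4*π^2) := by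
  have hπ : π ≠ 0 := Real.pi_ne_zero
  have hrw : ∀ s : ℝ, Real.cos (π * s) ^ 2 * s = s/2 + s * Real.cos (2*π*s) / 2 := by
    intro s
    rw [Real.cos_sq (π * s)]
    ring_nf
  -- integration by parts for ∫ s cos(2πs)
  have hv : ∀ x : ℝ, HasDerivAt (fun s : ℝ => Real.sin (2*π*s) / (2*π))
      (Real.cos (2*π*x)) x := by
    intro x
    have h1 : HasDerivAt (fun s : ℝ => 2*π*s) (2*π) x := by
      simpa using (hasDerivAt_id x).const_mul (2*π)
    have h2 := (Real.hasDerivAt_sin (2*π*x)).comp x h1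
    have h3 := h2.div_const (2*π)
    exact h3.congr_deriv (by field_simp)
  have hu : ∀ x : ℝ, HasDerivAt (fun s : ℝ => s) 1 x := fun x => hasDerivAt_id x
  have hparts : ∫ s in (0:ℝ)..(1/2:ℝ), s * Real.cos (2*π*s)
      = (1/2) * (Real.sin (2*π*(1/2)) / (2*π)) - 0 * (Real.sin (2*π*0) / (2*π))
        - ∫ s in (0:ℝ)..(1/2:ℝ), 1 * (Real.sin (2*π*s) / (2*π)) := by
    apply intervalIntegral.integral_mul_deriv_eq_deriv_mul
      (fun x _ => hu x) (fun x _ => hv x)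
    · exact intervalIntegrable_const
    · apply Continuous.intervalIntegrable; fun_prop
  have hsin : ∫ s in (0:ℝ)..(1/2:ℝ), Real.sin (2*π*s) = 1/π := by
    have h2π : (2*π) ≠ 0 := by positivity
    have := intervalIntegral.integral_comp_mul_left (a := (0:ℝ)) (b := (1/2:ℝ))
      (fun x => Real.sin x) h2π
    rw [this, integral_sin]
    simp [Real.cos_pi]
    field_simp
    norm_num [Real.cos_pi]
  have hxcos : ∫ s in (0:ℝ)..(1/2:ℝ), s * Real.cos (2*π*s) = -(1/(2*π^2)) := by
    rw [hparts]
    simp only [one_mul, mul_zero, zero_mul]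
    rw [intervalIntegral.integral_div, hsin]
    rw [show 2*π*(1/2 : ℝ) = π by ring]
    simp [Real.sin_pi]
    field_simp
  rw [show (fun s : ℝ => Real.cos (π * s) ^ 2 * s)
      = fun s : ℝ => s/2 + s * Real.cos (2*π*s) / 2 from funext hrw]
  have hi1 : IntervalIntegrable (fun s : ℝ => s/2) volume 0 (1/2) := by
    apply Continuous.intervalIntegrable; fun_prop
  have hi2 : IntervalIntegrable (fun s : ℝ => s * Real.cos (2*π*s) / 2) volume 0 (1/2) := by
    apply Continuous.intervalIntegrable; fun_prop
  rw [intervalIntegral.integral_add hi1 hi2, intervalIntegral.integral_div,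
    intervalIntegral.integral_div, integral_id, hxcos]
  field_simp
  ring

end WenAux

/-- `W_en(ϱ) := 1 - ϱ V_en^1(ϱ)` satisfies `0 ≤ W_en ≤ 1` on `(0,∞)` and
`∫_0^∞ W_en(ϱ) dϱ = 1/4 - 1/π²`. -/
theorem Wen_bounds_and_integral :
    (∀ ϱ : ℝ, 0 < ϱ → 0 ≤ 1 - ϱ * Ven1 ϱ ∧ 1 - ϱ * Ven1 ϱ ≤ 1) ∧
    ∫ ϱ in Set.Ioi (0 : ℝ), (1 - ϱ * Ven1 ϱ) = 1 / 4 - 1 / π ^ 2 := by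
  open WenAux Set Filter in
  constructor
  · intro ϱ hϱ
    rw [Wen_eq ϱ hϱ]
    constructor
    · have : 0 ≤ ∫ s in (0:ℝ)..(1/2:ℝ), g ϱ s := by
        apply intervalIntegral.integral_nonneg (by norm_num)
        intro s _
        exact g_nonneg ϱ s hϱ
      linarith
    · have hgi : IntervalIntegrable (fun s => g ϱ s) volume 0 (1/2) := by
        unfold WenAux.g
        have h1 : IntervalIntegrable (fun s : ℝ => Real.cos (π * s) ^ 2) volume 0 (1/2) := by
          apply Continuous.intervalIntegrable; fun_prop
        apply h1.mul_continuousOn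
        apply Continuous.continuousOn
        apply Continuous.sub continuous_const
        apply Continuous.div continuous_const (by fun_prop)
        intro s
        exact (sqrt_pos_of_rho ϱ s hϱ).ne'
      have hci : IntervalIntegrable (fun s : ℝ => Real.cos (π * s) ^ 2) volume 0 (1/2) := by
        apply Continuous.intervalIntegrable; fun_prop
      have hmono : (∫ s in (0:ℝ)..(1/2:ℝ), g ϱ s)
          ≤ ∫ s in (0:ℝ)..(1/2:ℝ), Real.cos (π * s) ^ 2 := by
        apply intervalIntegral.integral_mono_on (by norm_num) hgi hci
        intro s _
        exact g_le ϱ s hϱ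
      rw [cos_sq_integral] at hmono
      linarith
  · -- the main integral computation via Tonelli / Fubini
    set μ : Measure ℝ := volume.restrict (Ioi 0) with hμ
    set ν : Measure ℝ := volume.restrict (Ioc 0 (1/2 : ℝ)) with hν
    have hmeas : AEStronglyMeasurable (Function.uncurry g) (μ.prod ν) :=
      g_measurable.aestronglyMeasurable
    have hInt : Integrable (Function.uncurry g) (μ.prod ν) := by
      rw [MeasureTheory.integrable_prod_iff' hmeas]
      constructor
      · rw [hν]
        filter_upwards [ae_restrict_mem measurableSet_Ioc] with s hs
        exact inner_integrable_g s hs.1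
      · apply Integrable.congr (f := fun s : ℝ => Real.cos (π * s) ^ 2 * s)
        · rw [hν]
          exact (Continuous.integrableOn_Ioc (by fun_prop))
        · rw [hν]
          filter_upwards [ae_restrict_mem measurableSet_Ioc] with s hs
          have heq : ∀ ϱ ∈ Ioi (0:ℝ), ‖Function.uncurry g (ϱ, s)‖ = g ϱ s := by
            intro ϱ hϱ
            simp only [Function.uncurry]
            exact norm_of_nonneg (g_nonneg ϱ s hϱ)
          rw [hμ]
          rw [MeasureTheory.setIntegral_congr_fun measurableSet_Ioi heq]
          exact (inner_integral_g s hs.1).symm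
    have hswap := MeasureTheory.integral_integral_swap hInt
    -- identify LHS of swap with the target integral (divided by 4)
    have hL : ∫ ϱ in Ioi (0:ℝ), (1 - ϱ * Ven1 ϱ) = 4 * ∫ ϱ, (∫ s, g ϱ s ∂ν) ∂μ := by
      rw [hμ, hν]
      rw [← MeasureTheory.integral_const_mul]
      apply MeasureTheory.setIntegral_congr_fun measurableSet_Ioi
      intro ϱ hϱ
      dsimp only
      rw [Wen_eq ϱ hϱ]
      congr 1
      rw [intervalIntegral.integral_of_le (by norm_num : (0:ℝ) ≤ 1/2)]
    have hR : ∫ s, (∫ ϱ, g ϱ s ∂μ) ∂ν = ∫ s in (0:ℝ)..(1/2:ℝ), Real.cos (π * s) ^ 2 * s := by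
      rw [intervalIntegral.integral_of_le (by norm_num : (0:ℝ) ≤ 1/2), hν, hμ]
      apply MeasureTheory.setIntegral_congr_fun measurableSet_Ioc
      intro s hs
      exact inner_integral_g s hs.1
    rw [hL, hswap, hR, final_integral]
    have hπ : (π:ℝ) ≠ 0 := Real.pi_ne_zero
    field_simp
    ring
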